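/- Let Γ₁, Γ₂ be positive continuous radial functions on ℝ^N with Γ₁(r) ∼ r^{b₁} e^{−η₁ r} and Γ₂(r) ∼ r^{b₂} e^{−η₂ r} as r → ∞, where η₁ < η₂. Then as |ξ| → ∞, ∫_{ℝ^N} Γ₁(x − ξ) Γ₂(x) dx ∼ |ξ|^{b₁} e^{−η₁|ξ|}, i.e., the ratio of the two sides is bounded above and below by positive constants. -/

import Mathlib

open Filter MeasureTheory

lemma aux_div {a b c : ℝ} (ha : 0 < a) (hb : 0 < b) (h : a ≤ c * b) : b⁻¹ ≤ c * a⁻¹ := by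
  have h1 : a * (b⁻¹ * a⁻¹) ≤ (c * b) * (b⁻¹ * a⁻¹) :=
    mul_le_mul_of_nonneg_right h (by positivity)
  calc b⁻¹ = a * (b⁻¹ * a⁻¹) := by field_simp
    _ ≤ (c * b) * (b⁻¹ * a⁻¹) := h1
    _ = c * a⁻¹ := by field_simp

lemma aux_poly_exp (s ε : ℝ) (hε : 0 < ε) :
    ∃ C : ℝ, 0 < C ∧ ∀ t : ℝ, 1 ≤ t → t ^ s ≤ C * Real.exp (ε * t) := by
  have h := (isLittleO_rpow_exp_pos_mul_atTop s hε).isBigO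
  rw [Asymptotics.isBigO_iff] at h
  obtain ⟨c, hc⟩ := h
  rw [Filter.eventually_atTop] at hc
  obtain ⟨T, hT⟩ := hc
  set T' := max T 1 with hT'
  refine ⟨max 1 (max c (max 1 (T' ^ s))), lt_of_lt_of_le one_pos (le_max_left _ _), ?_⟩
  intro t ht
  have ht0 : (0:ℝ) < t := lt_of_lt_of_le one_pos ht
  have hexp : (0:ℝ) < Real.exp (ε * t) := Real.exp_pos _
  rcases le_total T' t with h1 | h1
  · have := hT t (le_trans (le_max_left _ _) h1)
    rw [Real.norm_eq_abs, Real.norm_eq_abs, Real.abs_exp] at this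
    calc t ^ s ≤ |t ^ s| := le_abs_self _
      _ ≤ c * Real.exp (ε * t) := this
      _ ≤ max 1 (max c (max 1 (T' ^ s))) * Real.exp (ε * t) := by
          apply mul_le_mul_of_nonneg_right _ hexp.le
          exact le_trans (le_max_left _ _) (le_max_right _ _)
  · have hkey : t ^ s ≤ max 1 (T' ^ s) := by
      rcases le_or_gt 0 s with hs | hs
      · exact le_trans (Real.rpow_le_rpow ht0.le h1 hs) (le_max_right _ _)
      · exact le_trans (Real.rpow_le_one_of_one_le_of_nonpos ht hs.le) (le_max_left _ _)
    calc t ^ s ≤ max 1 (T' ^ s) := hkey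
      _ ≤ max 1 (max c (max 1 (T' ^ s))) := le_trans (le_max_right c _) (le_max_right 1 _)
      _ ≤ max 1 (max c (max 1 (T' ^ s))) * Real.exp (ε * t) := by
          apply le_mul_of_one_le_right (le_trans one_pos.le (le_max_left _ _))
          exact Real.one_le_exp (by positivity)

lemma aux_exp_poly (s ε : ℝ) (hε : 0 < ε) :
    ∃ C : ℝ, 0 < C ∧ ∀ t : ℝ, 1 ≤ t → Real.exp (-(ε * t)) ≤ C * t ^ s := by
  obtain ⟨C, hC, h⟩ := aux_poly_exp (-s) ε hε
  refine ⟨C, hC, fun t ht => ?_⟩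
  have ht0 : (0:ℝ) < t := lt_of_lt_of_le one_pos ht
  have h1 := h t ht
  have h2 := aux_div (Real.rpow_pos_of_pos ht0 (-s)) (Real.exp_pos (ε * t)) h1
  rw [Real.rpow_neg ht0.le, inv_inv] at h2
  rw [Real.exp_neg]
  exact h2

lemma aux_ratio (s : ℝ) :
    ∃ C : ℝ, 0 < C ∧ ∀ u v : ℝ, 0 < u → 0 < v → v ≤ 2 * u → u ≤ 2 * v →
      u ^ s ≤ C * v ^ s := by
  refine ⟨(2:ℝ) ^ |s|, Real.rpow_pos_of_pos two_pos _, ?_⟩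
  intro u v hu hv h1 h2
  rcases le_or_gt 0 s with hs | hs
  · calc u ^ s ≤ (2 * v) ^ s := Real.rpow_le_rpow hu.le h2 hs
      _ = 2 ^ s * v ^ s := Real.mul_rpow (by norm_num) hv.le
      _ ≤ 2 ^ |s| * v ^ s := by
          apply mul_le_mul_of_nonneg_right _ (Real.rpow_pos_of_pos hv s).le
          exact Real.rpow_le_rpow_of_exponent_le one_le_two (le_abs_self s)
  · have hhalf : v / 2 ≤ u := by linarith
    have habs : |s| = -s := abs_of_neg hs
    calc u ^ s ≤ (v / 2) ^ s :=
          Real.rpow_le_rpow_of_nonpos (by positivity) hhalf hs.le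
      _ = 2 ^ (-s) * v ^ s := by
          rw [div_eq_mul_inv, Real.mul_rpow hv.le (by norm_num),
            Real.inv_rpow (by norm_num), ← Real.rpow_neg (by norm_num)]
          ring
      _ ≤ 2 ^ |s| * v ^ s := by rw [habs]

lemma aux_int (N : ℕ) (δ : ℝ) (hδ : 0 < δ) :
    Integrable (fun x : EuclideanSpace ℝ (Fin N) => Real.exp (-(δ * ‖x‖))) := by
  obtain ⟨C, hC, h⟩ := aux_poly_exp (N + 1 : ℝ) δ hδ
  have hfin : ((Module.finrank ℝ (EuclideanSpace ℝ (Fin N))) : ℝ) < (N + 1 : ℝ) := by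
    rw [finrank_euclideanSpace_fin]; norm_num
  have hint := (integrable_one_add_norm (μ := (volume : Measure (EuclideanSpace ℝ (Fin N))))
      (r := (N + 1 : ℝ)) hfin).const_mul (Real.exp δ * C)
  apply hint.mono' ((Real.continuous_exp.comp ((continuous_const.mul continuous_norm).neg)).aestronglyMeasurable)
  filter_upwards with x
  simp only [Function.comp_apply]
  rw [Real.norm_of_nonneg (Real.exp_pos _).le]
  have h1 : (1 + ‖x‖) ^ (N + 1 : ℝ) ≤ C * Real.exp (δ * (1 + ‖x‖)) := h _ (by simp)
  have h2 := aux_div (Real.rpow_pos_of_pos (by positivity) (N + 1 : ℝ))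
      (Real.exp_pos (δ * (1 + ‖x‖))) h1
  rw [← Real.exp_neg, ← Real.rpow_neg (by positivity)] at h2
  calc Real.exp (-(δ * ‖x‖)) = Real.exp δ * Real.exp (-(δ * (1 + ‖x‖))) := by
        rw [← Real.exp_add]; ring_nf
    _ ≤ Real.exp δ * (C * (1 + ‖x‖) ^ (-(N + 1 : ℝ))) := by
        apply mul_le_mul_of_nonneg_left h2 (Real.exp_pos _).le
    _ = Real.exp δ * C * (1 + ‖x‖) ^ (-(N + 1 : ℝ)) := by ring

lemma aux_global (Γ : ℝ → ℝ) (b η c' r₀ ε : ℝ) (hcont : Continuous Γ)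
    (hε : 0 < ε) (hεη : ε < η) (hc' : 0 < c')
    (h : ∀ r : ℝ, r₀ ≤ r → Γ r ≤ c' * r ^ b * Real.exp (-η * r)) :
    ∃ M : ℝ, 0 < M ∧ ∀ r : ℝ, 0 ≤ r → Γ r ≤ M * Real.exp (-((η - ε) * r)) := by
  obtain ⟨C, hC, hCb⟩ := aux_poly_exp b ε hε
  set R := max r₀ 1 with hR
  have hR1 : (1:ℝ) ≤ R := le_max_right _ _
  obtain ⟨M₀, hM₀⟩ := (isCompact_Icc (a := (0:ℝ)) (b := R)).exists_bound_of_continuousOn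
    hcont.continuousOn
  refine ⟨max ((max M₀ 1) * Real.exp ((η - ε) * R)) (c' * C), ?_, ?_⟩
  · have h1 : (0:ℝ) < (max M₀ 1) * Real.exp ((η - ε) * R) := by
      have : (0:ℝ) < max M₀ 1 := lt_of_lt_of_le one_pos (le_max_right _ _)
      positivity
    exact lt_of_lt_of_le h1 (le_max_left _ _)
  intro r hr
  rcases le_total r R with h1 | h1
  · have hb := hM₀ r ⟨hr, h1⟩
    calc Γ r ≤ max M₀ 1 := le_trans (le_trans (le_abs_self _) hb) (le_max_left _ _)
      _ ≤ (max M₀ 1) * (Real.exp ((η - ε) * R) * Real.exp (-((η - ε) * r))) := by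
          apply le_mul_of_one_le_right (le_trans one_pos.le (le_max_right _ _))
          rw [← Real.exp_add]
          apply Real.one_le_exp
          nlinarith [mul_nonneg (sub_nonneg.mpr hεη.le) (sub_nonneg.mpr h1)]
      _ = (max M₀ 1) * Real.exp ((η - ε) * R) * Real.exp (-((η - ε) * r)) := by ring
      _ ≤ max ((max M₀ 1) * Real.exp ((η - ε) * R)) (c' * C) * Real.exp (-((η - ε) * r)) :=
          mul_le_mul_of_nonneg_right (le_max_left _ _) (Real.exp_pos _).le
  · have hrr₀ : r₀ ≤ r := le_trans (le_max_left _ _) h1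
    have hr1 : (1:ℝ) ≤ r := le_trans hR1 h1
    calc Γ r ≤ c' * r ^ b * Real.exp (-η * r) := h r hrr₀
      _ ≤ c' * (C * Real.exp (ε * r)) * Real.exp (-η * r) := by
          apply mul_le_mul_of_nonneg_right _ (Real.exp_pos _).le
          exact mul_le_mul_of_nonneg_left (hCb r hr1) hc'.le
      _ = (c' * C) * Real.exp (-((η - ε) * r)) := by
          rw [show c' * (C * Real.exp (ε * r)) * Real.exp (-η * r)
              = (c' * C) * (Real.exp (ε * r) * Real.exp (-η * r)) by ring, ← Real.exp_add]
          ring_nf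
      _ ≤ max ((max M₀ 1) * Real.exp ((η - ε) * R)) (c' * C) * Real.exp (-((η - ε) * r)) :=
          mul_le_mul_of_nonneg_right (le_max_right _ _) (Real.exp_pos _).le
theorem stmt_4 (N : ℕ) (Γ₁ Γ₂ : ℝ → ℝ) (b₁ b₂ η₁ η₂ : ℝ)
    (hη₁ : 0 < η₁) (hη : η₁ < η₂)
    (hcont₁ : Continuous Γ₁) (hcont₂ : Continuous Γ₂)
    (hpos₁ : ∀ r : ℝ, 0 ≤ r → 0 < Γ₁ r) (hpos₂ : ∀ r : ℝ, 0 ≤ r → 0 < Γ₂ r)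
    (hasymp₁ : ∃ c c' r₀ : ℝ, 0 < c ∧ 0 < c' ∧ ∀ r : ℝ, r₀ ≤ r →
      c * r ^ b₁ * Real.exp (-η₁ * r) ≤ Γ₁ r ∧ Γ₁ r ≤ c' * r ^ b₁ * Real.exp (-η₁ * r))
    (hasymp₂ : ∃ c c' r₀ : ℝ, 0 < c ∧ 0 < c' ∧ ∀ r : ℝ, r₀ ≤ r →
      c * r ^ b₂ * Real.exp (-η₂ * r) ≤ Γ₂ r ∧ Γ₂ r ≤ c' * r ^ b₂ * Real.exp (-η₂ * r)) :
    ∃ C R₀ : ℝ, 1 ≤ C ∧ ∀ ξ : EuclideanSpace ℝ (Fin N), R₀ ≤ ‖ξ‖ →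
      (1 / C) * (‖ξ‖ ^ b₁ * Real.exp (-η₁ * ‖ξ‖))
          ≤ (∫ x : EuclideanSpace ℝ (Fin N), Γ₁ ‖x - ξ‖ * Γ₂ ‖x‖) ∧
      (∫ x : EuclideanSpace ℝ (Fin N), Γ₁ ‖x - ξ‖ * Γ₂ ‖x‖)
          ≤ C * (‖ξ‖ ^ b₁ * Real.exp (-η₁ * ‖ξ‖)) := by
  obtain ⟨c₁, c₁', r₁, hc₁, hc₁', h₁⟩ := hasymp₁
  obtain ⟨c₂, c₂', r₂, hc₂, hc₂', h₂⟩ := hasymp₂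
  set δ : ℝ := (η₂ - η₁) / 2 with hδdef
  have hδ : 0 < δ := by rw [hδdef]; linarith
  set ε : ℝ := min (δ / 4) (η₁ / 2) with hεdef
  have hε : 0 < ε := lt_min (by positivity) (by positivity)
  have hεδ : ε ≤ δ / 4 := min_le_left _ _
  have hεη : ε < η₁ := lt_of_le_of_lt (min_le_right _ _) (by linarith)
  have hεη₂ : ε < η₂ := lt_trans hεη hη
  obtain ⟨M₁, hM₁, hg₁⟩ := aux_global Γ₁ b₁ η₁ c₁' r₁ ε hcont₁ hε hεη hc₁'
    (fun r hr => (h₁ r hr).2)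
  obtain ⟨M₂, hM₂, hg₂⟩ := aux_global Γ₂ b₂ η₂ c₂' r₂ ε hcont₂ hε hεη₂ hc₂'
    (fun r hr => (h₂ r hr).2)
  obtain ⟨Cp, hCp, hCpf⟩ := aux_ratio b₁
  obtain ⟨Cq, hCq, hCqf⟩ := aux_exp_poly b₁ (δ / 4) (by positivity)
  have hIδint : Integrable (fun x : EuclideanSpace ℝ (Fin N) => Real.exp (-(δ * ‖x‖))) :=
    aux_int N δ hδ
  have h2δint : Integrable (fun x : EuclideanSpace ℝ (Fin N) => Real.exp (-(2 * δ * ‖x‖))) :=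
    aux_int N (2 * δ) (by positivity)
  set Iδ : ℝ := ∫ x : EuclideanSpace ℝ (Fin N), Real.exp (-(δ * ‖x‖)) with hIδdef
  have hIδ0 : 0 ≤ Iδ := integral_nonneg fun x => (Real.exp_pos _).le
  obtain ⟨x₀, hx₀mem, hx₀min⟩ := (isCompact_Icc (a := (0:ℝ)) (b := 1)).exists_isMinOn
    ⟨0, by norm_num⟩ hcont₂.continuousOn
  set m₂ : ℝ := Γ₂ x₀ with hm₂def
  have hm₂ : 0 < m₂ := hpos₂ x₀ hx₀mem.1
  have hvol : 0 < (volume (Metric.closedBall (0 : EuclideanSpace ℝ (Fin N)) 1)).toReal := by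
    apply ENNReal.toReal_pos
    · exact ne_of_gt (lt_of_lt_of_le (Metric.measure_ball_pos _ _ one_pos)
        (measure_mono Metric.ball_subset_closedBall))
    · exact measure_closedBall_lt_top.ne
  set vol : ℝ := (volume (Metric.closedBall (0 : EuclideanSpace ℝ (Fin N)) 1)).toReal
    with hvoldef
  set Rm : ℝ := max r₁ 1 with hRmdef
  have hRm1 : (1:ℝ) ≤ Rm := le_max_right _ _
  have hr₁Rm : r₁ ≤ Rm := le_max_left _ _
  set K : ℝ := max (c₁' * Cp * M₂) (M₁ * M₂ * Cq) with hKdef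
  have hK : 0 < K := lt_of_lt_of_le (by positivity) (le_max_left _ _)
  refine ⟨max 1 (max (K * Iδ) (Cp * Real.exp η₁ / (c₁ * m₂ * vol))), 2 * Rm + 2,
    le_max_left _ _, ?_⟩
  set C : ℝ := max 1 (max (K * Iδ) (Cp * Real.exp η₁ / (c₁ * m₂ * vol))) with hCdef
  have hC0 : 0 < C := lt_of_lt_of_le one_pos (le_max_left _ _)
  intro ξ hξ
  set n : ℝ := ‖ξ‖ with hndef
  have hnRm : 2 * Rm + 2 ≤ n := hξ
  have hn4 : 4 ≤ n := by linarith
  have hn0 : 0 < n := by linarith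
  set Φ : ℝ := n ^ b₁ * Real.exp (-η₁ * n) with hΦdef
  have hΦ0 : 0 ≤ Φ := by
    rw [hΦdef]
    exact mul_nonneg (Real.rpow_pos_of_pos hn0 b₁).le (Real.exp_pos _).le
  set f : EuclideanSpace ℝ (Fin N) → ℝ := fun x => Γ₁ ‖x - ξ‖ * Γ₂ ‖x‖ with hfdef
  have hfcont : Continuous f := (hcont₁.comp ((continuous_id.sub continuous_const).norm)).mul
    (hcont₂.comp continuous_norm)
  have hf0 : ∀ x, 0 ≤ f x := fun x =>
    (mul_pos (hpos₁ _ (norm_nonneg _)) (hpos₂ _ (norm_nonneg _))).le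
  have htri : ∀ x : EuclideanSpace ℝ (Fin N), n ≤ ‖x‖ + ‖x - ξ‖ := by
    intro x
    rw [hndef]
    simpa using norm_sub_le x (x - ξ)
  have htri2 : ∀ x : EuclideanSpace ℝ (Fin N), ‖x - ξ‖ ≤ ‖x‖ + n := by
    intro x
    rw [hndef]
    exact norm_sub_le x ξ
  -- master pointwise bound
  have hbd1 : ∀ x, f x ≤ M₁ * M₂ * Real.exp (-((η₁ - ε) * n)) * Real.exp (-(2 * δ * ‖x‖)) := by
    intro x
    have e1 : Γ₁ ‖x - ξ‖ ≤ M₁ * Real.exp (-((η₁ - ε) * ‖x - ξ‖)) := hg₁ _ (norm_nonneg _)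
    have e2 : Γ₂ ‖x‖ ≤ M₂ * Real.exp (-((η₂ - ε) * ‖x‖)) := hg₂ _ (norm_nonneg _)
    have e3 : f x ≤ M₁ * M₂ *
        (Real.exp (-((η₁ - ε) * ‖x - ξ‖)) * Real.exp (-((η₂ - ε) * ‖x‖))) := by
      calc f x ≤ (M₁ * Real.exp (-((η₁ - ε) * ‖x - ξ‖))) * (M₂ * Real.exp (-((η₂ - ε) * ‖x‖))) :=
            mul_le_mul e1 e2 (hpos₂ _ (norm_nonneg _)).le (by positivity)
        _ = _ := by ring
    refine le_trans e3 ?_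
    rw [mul_assoc (M₁ * M₂), ← Real.exp_add, ← Real.exp_add]
    apply mul_le_mul_of_nonneg_left _ (by positivity : (0:ℝ) ≤ M₁ * M₂)
    apply Real.exp_le_exp.2
    have h5 : (η₁ - ε) * n ≤ (η₁ - ε) * (‖x‖ + ‖x - ξ‖) :=
      mul_le_mul_of_nonneg_left (htri x) (by linarith)
    have h7 : 2 * δ * ‖x‖ = (η₂ - η₁) * ‖x‖ := by rw [hδdef]; ring
    linarith [h5, h7]
  have hfint : Integrable f := by
    apply (h2δint.const_mul (M₁ * M₂ * Real.exp (-((η₁ - ε) * n)))).mono'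
      hfcont.aestronglyMeasurable
    filter_upwards with x
    rw [Real.norm_of_nonneg (hf0 x)]
    exact hbd1 x
  -- refined pointwise upper bound
  have hbd2 : ∀ x, f x ≤ K * Φ * Real.exp (-(δ * ‖x‖)) := by
    intro x
    have ha0 : (0:ℝ) ≤ ‖x - ξ‖ := norm_nonneg _
    have ht0 : (0:ℝ) ≤ ‖x‖ := norm_nonneg _
    have htria := htri x
    rcases le_or_gt ‖x‖ (n / 2) with hcase | hcase
    · have ha1 : n / 2 ≤ ‖x - ξ‖ := by linarith
      have ha2 : ‖x - ξ‖ ≤ 2 * n := by have := htri2 x; linarith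
      have hapos : (0:ℝ) < ‖x - ξ‖ := by linarith
      have har₁ : r₁ ≤ ‖x - ξ‖ := by linarith
      have e1 : Γ₁ ‖x - ξ‖ ≤ c₁' * ‖x - ξ‖ ^ b₁ * Real.exp (-η₁ * ‖x - ξ‖) := (h₁ _ har₁).2
      have e2 : ‖x - ξ‖ ^ b₁ ≤ Cp * n ^ b₁ := hCpf _ n hapos hn0 (by linarith) (by linarith)
      have e3 : Real.exp (-η₁ * ‖x - ξ‖) ≤ Real.exp (-η₁ * n) * Real.exp (η₁ * ‖x‖) := by
        rw [← Real.exp_add]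
        apply Real.exp_le_exp.2
        linarith [mul_le_mul_of_nonneg_left htria hη₁.le]
      have e4 : Γ₂ ‖x‖ ≤ M₂ * Real.exp (-((η₂ - ε) * ‖x‖)) := hg₂ _ ht0
      have e5 : Real.exp (η₁ * ‖x‖) * Real.exp (-((η₂ - ε) * ‖x‖)) ≤ Real.exp (-(δ * ‖x‖)) := by
        rw [← Real.exp_add]
        apply Real.exp_le_exp.2
        linarith [mul_nonneg (show (0:ℝ) ≤ η₂ - η₁ - ε - δ by linarith) ht0]
      calc f x = Γ₁ ‖x - ξ‖ * Γ₂ ‖x‖ := rfl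
        _ ≤ (c₁' * ‖x - ξ‖ ^ b₁ * Real.exp (-η₁ * ‖x - ξ‖)) *
            (M₂ * Real.exp (-((η₂ - ε) * ‖x‖))) :=
            mul_le_mul e1 e4 (hpos₂ _ ht0).le (by positivity)
        _ ≤ (c₁' * (Cp * n ^ b₁) * (Real.exp (-η₁ * n) * Real.exp (η₁ * ‖x‖))) *
            (M₂ * Real.exp (-((η₂ - ε) * ‖x‖))) := by
            apply mul_le_mul_of_nonneg_right _ (by positivity)
            exact mul_le_mul (mul_le_mul_of_nonneg_left e2 hc₁'.le) e3 (Real.exp_pos _).le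
              (by positivity)
        _ = (c₁' * Cp * M₂) * (n ^ b₁ * Real.exp (-η₁ * n)) *
            (Real.exp (η₁ * ‖x‖) * Real.exp (-((η₂ - ε) * ‖x‖))) := by ring
        _ ≤ (c₁' * Cp * M₂) * (n ^ b₁ * Real.exp (-η₁ * n)) * Real.exp (-(δ * ‖x‖)) := by
            apply mul_le_mul_of_nonneg_left e5
            positivity
        _ ≤ K * Φ * Real.exp (-(δ * ‖x‖)) := by
            rw [hΦdef, hKdef]
            apply mul_le_mul_of_nonneg_right _ (Real.exp_pos _).le
            apply mul_le_mul_of_nonneg_right (le_max_left _ _)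
            exact mul_nonneg (Real.rpow_pos_of_pos hn0 b₁).le (Real.exp_pos _).le
    · have e2 : Real.exp (-(2 * δ * ‖x‖)) ≤
          Real.exp (-(δ * (n / 2))) * Real.exp (-(δ * ‖x‖)) := by
        rw [← Real.exp_add]
        apply Real.exp_le_exp.2
        linarith [mul_le_mul_of_nonneg_left hcase.le hδ.le]
      have e3 : Real.exp (-((η₁ - ε) * n)) * Real.exp (-(δ * (n / 2))) ≤
          Real.exp (-η₁ * n) * Real.exp (-(δ / 4 * n)) := by
        rw [← Real.exp_add, ← Real.exp_add]
        apply Real.exp_le_exp.2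
        linarith [mul_le_mul_of_nonneg_right hεδ hn0.le]
      have e4 : Real.exp (-(δ / 4 * n)) ≤ Cq * n ^ b₁ := hCqf n (by linarith)
      calc f x ≤ M₁ * M₂ * Real.exp (-((η₁ - ε) * n)) * Real.exp (-(2 * δ * ‖x‖)) := hbd1 x
        _ ≤ M₁ * M₂ * Real.exp (-((η₁ - ε) * n)) *
            (Real.exp (-(δ * (n / 2))) * Real.exp (-(δ * ‖x‖))) := by
            apply mul_le_mul_of_nonneg_left e2
            positivity
        _ = (M₁ * M₂) * (Real.exp (-((η₁ - ε) * n)) * Real.exp (-(δ * (n / 2)))) *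
            Real.exp (-(δ * ‖x‖)) := by ring
        _ ≤ (M₁ * M₂) * (Real.exp (-η₁ * n) * Real.exp (-(δ / 4 * n))) *
            Real.exp (-(δ * ‖x‖)) := by
            apply mul_le_mul_of_nonneg_right (mul_le_mul_of_nonneg_left e3 (by positivity))
              (Real.exp_pos _).le
        _ ≤ (M₁ * M₂) * (Real.exp (-η₁ * n) * (Cq * n ^ b₁)) * Real.exp (-(δ * ‖x‖)) := by
            apply mul_le_mul_of_nonneg_right _ (Real.exp_pos _).le
            exact mul_le_mul_of_nonneg_left
              (mul_le_mul_of_nonneg_left e4 (Real.exp_pos _).le) (by positivity)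
        _ = (M₁ * M₂ * Cq) * (n ^ b₁ * Real.exp (-η₁ * n)) * Real.exp (-(δ * ‖x‖)) := by ring
        _ ≤ K * Φ * Real.exp (-(δ * ‖x‖)) := by
            rw [hΦdef, hKdef]
            apply mul_le_mul_of_nonneg_right _ (Real.exp_pos _).le
            apply mul_le_mul_of_nonneg_right (le_max_right _ _)
            exact mul_nonneg (Real.rpow_pos_of_pos hn0 b₁).le (Real.exp_pos _).le
  -- upper bound
  have hupper : (∫ x, f x) ≤ C * Φ := by
    have hmono := integral_mono hfint (hIδint.const_mul (K * Φ)) (fun x => hbd2 x)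
    calc (∫ x, f x) ≤ ∫ x : EuclideanSpace ℝ (Fin N), (K * Φ) * Real.exp (-(δ * ‖x‖)) := hmono
      _ = (K * Φ) * Iδ := by rw [MeasureTheory.integral_const_mul]
      _ = (K * Iδ) * Φ := by ring
      _ ≤ C * Φ := by
          apply mul_le_mul_of_nonneg_right _ hΦ0
          exact le_trans (le_max_left _ _) (le_max_right _ _)
  -- lower bound
  have hlow : ∀ x ∈ Metric.closedBall (0 : EuclideanSpace ℝ (Fin N)) 1,
      c₁ * m₂ / Cp * Real.exp (-η₁) * Φ ≤ f x := by
    intro x hx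
    rw [Metric.mem_closedBall, dist_zero_right] at hx
    have htria := htri x
    have ha1 : n - 1 ≤ ‖x - ξ‖ := by linarith
    have ha2 : ‖x - ξ‖ ≤ n + 1 := by have := htri2 x; linarith
    have hapos : (0:ℝ) < ‖x - ξ‖ := by linarith
    have har₁ : r₁ ≤ ‖x - ξ‖ := by linarith
    have e1 : c₁ * ‖x - ξ‖ ^ b₁ * Real.exp (-η₁ * ‖x - ξ‖) ≤ Γ₁ ‖x - ξ‖ := (h₁ _ har₁).1
    have e2 : n ^ b₁ ≤ Cp * ‖x - ξ‖ ^ b₁ := hCpf n _ hn0 hapos (by linarith) (by linarith)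
    have hdiv : n ^ b₁ / Cp ≤ ‖x - ξ‖ ^ b₁ := (div_le_iff₀ hCp).2 (by linarith)
    have e3 : Real.exp (-η₁ * n) * Real.exp (-η₁) ≤ Real.exp (-η₁ * ‖x - ξ‖) := by
      rw [← Real.exp_add]
      apply Real.exp_le_exp.2
      linarith [mul_le_mul_of_nonneg_left ha2 hη₁.le]
    have e4 : m₂ ≤ Γ₂ ‖x‖ := isMinOn_iff.mp hx₀min ‖x‖ ⟨norm_nonneg x, hx⟩
    calc c₁ * m₂ / Cp * Real.exp (-η₁) * Φ
        = (c₁ * (n ^ b₁ / Cp) * (Real.exp (-η₁ * n) * Real.exp (-η₁))) * m₂ := by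
          rw [hΦdef]; ring
      _ ≤ (c₁ * ‖x - ξ‖ ^ b₁ * Real.exp (-η₁ * ‖x - ξ‖)) * m₂ := by
          apply mul_le_mul_of_nonneg_right _ hm₂.le
          exact mul_le_mul (mul_le_mul_of_nonneg_left hdiv hc₁.le) e3 (by positivity)
            (by positivity)
      _ ≤ Γ₁ ‖x - ξ‖ * Γ₂ ‖x‖ := mul_le_mul e1 e4 hm₂.le (hpos₁ _ hapos.le).le
      _ = f x := rfl
  have hlower : (1 / C) * Φ ≤ ∫ x, f x := by
    have hstep := setIntegral_ge_of_const_le (μ := volume)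
      measurableSet_closedBall measure_closedBall_lt_top.ne hlow
      hfint.integrableOn
    have hstep2 := setIntegral_le_integral (μ := volume)
      (s := Metric.closedBall (0 : EuclideanSpace ℝ (Fin N)) 1) hfint (ae_of_all _ hf0)
    have hLC : 1 / C ≤ c₁ * m₂ / Cp * Real.exp (-η₁) * vol := by
      have h3 : Cp * Real.exp η₁ / (c₁ * m₂ * vol) ≤ C :=
        le_trans (le_max_right _ _) (le_max_right _ _)
      have hpos3 : (0:ℝ) < Cp * Real.exp η₁ / (c₁ * m₂ * vol) := by positivity
      calc 1 / C ≤ 1 / (Cp * Real.exp η₁ / (c₁ * m₂ * vol)) :=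
            one_div_le_one_div_of_le hpos3 h3
        _ = c₁ * m₂ / Cp * Real.exp (-η₁) * vol := by
            rw [Real.exp_neg]
            field_simp
    calc (1 / C) * Φ ≤ (c₁ * m₂ / Cp * Real.exp (-η₁) * vol) * Φ :=
          mul_le_mul_of_nonneg_right hLC hΦ0
      _ = (c₁ * m₂ / Cp * Real.exp (-η₁) * Φ) * vol := by ring
      _ ≤ ∫ x in Metric.closedBall (0 : EuclideanSpace ℝ (Fin N)) 1, f x := by
          rw [smul_eq_mul, mul_comm] at hstep; exact hstep
      _ ≤ ∫ x, f x := hstep2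
  exact ⟨hlower, hupper⟩
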